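/- Let Γ₁ → Γ be a surjective homomorphism of finite groups, and let L be a Γ-lattice (a finitely generated free abelian group with Γ-action), viewed as a Γ₁-lattice via the surjection. If L is quasi-permutation as a Γ₁-lattice (i.e., fits into a short exact sequence 0 → L → P → P' → 0 with P, P' permutation Γ₁-lattices), then L is quasi-permutation as a Γ-lattice. -/

import Mathlib

/-! Basic definitions: Γ-lattices, permutation / quasi-permutation / invertible /
quasi-invertible lattices, group cohomology via inhomogeneous cochains,
Tate–Shafarevich groups, and the lattice `J_Γ = ℤ[Γ]/ℤ`. -/

/-- A bundled additive module with an action of the group `Γ`. -/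
structure GammaMod (Γ : Type) [Group Γ] : Type 1 where
  carrier : Type
  [acg : AddCommGroup carrier]
  [act : DistribMulAction Γ carrier]

attribute [instance] GammaMod.acg GammaMod.act

section Lattices

variable {Γ : Type} [Group Γ]

/-- A permutation `Γ`-lattice: it admits a finite `ℤ`-basis permuted by `Γ`. -/
def IsPermutation (P : GammaMod Γ) : Prop :=
  ∃ (ι : Type) (_ : Fintype ι) (b : Module.Basis ι ℤ P.carrier),
    ∀ (γ : Γ) (i : ι), ∃ j, γ • (b i) = b j

/-- A `Γ`-equivariant additive map. -/
def IsEquivariant {A B : GammaMod Γ} (f : A.carrier →+ B.carrier) : Prop :=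
  ∀ (γ : Γ) (x : A.carrier), f (γ • x) = γ • f x

/-- `0 → A → B → C → 0` is short exact. -/
def IsShortExact {A B C : GammaMod Γ} (f : A.carrier →+ B.carrier)
    (g : B.carrier →+ C.carrier) : Prop :=
  Function.Injective f ∧ Function.Surjective g ∧ ∀ y, g y = 0 ↔ y ∈ Set.range f

/-- A quasi-permutation `Γ`-lattice: it fits into a short exact sequence
`0 → L → P → P' → 0` with `P`, `P'` permutation lattices. -/
def IsQuasiPermutation (L : GammaMod Γ) : Prop :=
  ∃ (P P' : GammaMod Γ), IsPermutation P ∧ IsPermutation P' ∧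
    ∃ (f : L.carrier →+ P.carrier) (g : P.carrier →+ P'.carrier),
      IsEquivariant f ∧ IsEquivariant g ∧ IsShortExact f g

/-- `A` is a direct summand of `B` (equivariantly). -/
def IsDirectSummandOf (A B : GammaMod Γ) : Prop :=
  ∃ (i : A.carrier →+ B.carrier) (r : B.carrier →+ A.carrier),
    IsEquivariant i ∧ IsEquivariant r ∧ r.comp i = AddMonoidHom.id _

/-- An invertible `Γ`-lattice: a direct summand of a permutation lattice. -/
def IsInvertibleLat (I : GammaMod Γ) : Prop :=
  ∃ P : GammaMod Γ, IsPermutation P ∧ IsDirectSummandOf I P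

/-- A quasi-invertible `Γ`-lattice: a direct summand of a quasi-permutation lattice. -/
def IsQuasiInvertible (L : GammaMod Γ) : Prop :=
  ∃ Q : GammaMod Γ, IsQuasiPermutation Q ∧ IsDirectSummandOf L Q

end Lattices

/-- The action of `G` on an invariant additive subgroup. -/
def subAction {G M : Type} [Group G] [AddCommGroup M] [DistribMulAction G M]
    (S : AddSubgroup M) (h : ∀ (g : G) (x : M), x ∈ S → g • x ∈ S) :
    DistribMulAction G S where
  smul g x := ⟨g • (x : M), h g x x.2⟩
  one_smul x := Subtype.ext (one_smul G (x : M))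
  mul_smul g g' x := Subtype.ext (mul_smul g g' (x : M))
  smul_zero g := Subtype.ext (smul_zero g)
  smul_add g x y := Subtype.ext (smul_add g (x : M) (y : M))

section Cohomology

variable (G : Type) [Group G] (M : Type) [AddCommGroup M] [DistribMulAction G M]

/-- Inhomogeneous 2-cocycle condition. -/
def IsCocycle2 (f : G → G → M) : Prop :=
  ∀ g h k : G, g • f h k + f g (h * k) = f (g * h) k + f g h

/-- Inhomogeneous 2-coboundary condition. -/
def IsCoboundary2 (f : G → G → M) : Prop :=
  ∃ φ : G → M, ∀ g h : G, f g h = g • φ h + φ g - φ (g * h)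

/-- Inhomogeneous 3-cocycle condition. -/
def IsCocycle3 (f : G → G → G → M) : Prop :=
  ∀ g h k l : G,
    g • f h k l + f g (h * k) l + f g h k = f (g * h) k l + f g h (k * l)

/-- Inhomogeneous 3-coboundary condition. -/
def IsCoboundary3 (f : G → G → G → M) : Prop :=
  ∃ φ : G → G → M, ∀ g h k : G,
    f g h k = g • φ h k - φ (g * h) k + φ g (h * k) - φ g h

/-- The subgroup of 2-cocycles. -/
def cocycles2 : AddSubgroup (G → G → M) where
  carrier := {f | IsCocycle2 G M f}
  add_mem' := by
    intro f g hf hg a b c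
    have := congrArg₂ (· + ·) (hf a b c) (hg a b c)
    simp only [Pi.add_apply, smul_add]
    abel_nf at this ⊢
    exact this
  zero_mem' := by intro a b c; simp
  neg_mem' := by
    intro f hf a b c
    have := congrArg Neg.neg (hf a b c)
    simp only [Pi.neg_apply, smul_neg]
    abel_nf at this ⊢
    exact this

/-- The subgroup of 2-coboundaries. -/
def coboundaries2 : AddSubgroup (G → G → M) where
  carrier := {f | IsCoboundary2 G M f}
  add_mem' := by
    rintro f g ⟨φ, hφ⟩ ⟨ψ, hψ⟩
    refine ⟨φ + ψ, fun a b => ?_⟩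
    simp only [Pi.add_apply, smul_add, hφ a b, hψ a b]
    abel
  zero_mem' := ⟨0, by intro a b; simp⟩
  neg_mem' := by
    rintro f ⟨φ, hφ⟩
    refine ⟨-φ, fun a b => ?_⟩
    simp only [Pi.neg_apply, smul_neg, hφ a b]
    abel

/-- The subgroup of 3-cocycles. -/
def cocycles3 : AddSubgroup (G → G → G → M) where
  carrier := {f | IsCocycle3 G M f}
  add_mem' := by
    intro f g hf hg a b c d
    have := congrArg₂ (· + ·) (hf a b c d) (hg a b c d)
    simp only [Pi.add_apply, smul_add]
    abel_nf at this ⊢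
    exact this
  zero_mem' := by intro a b c d; simp
  neg_mem' := by
    intro f hf a b c d
    have := congrArg Neg.neg (hf a b c d)
    simp only [Pi.neg_apply, smul_neg]
    abel_nf at this ⊢
    exact this

/-- The subgroup of 3-coboundaries. -/
def coboundaries3 : AddSubgroup (G → G → G → M) where
  carrier := {f | IsCoboundary3 G M f}
  add_mem' := by
    rintro f g ⟨φ, hφ⟩ ⟨ψ, hψ⟩
    refine ⟨φ + ψ, fun a b c => ?_⟩
    simp only [Pi.add_apply, smul_add, hφ a b c, hψ a b c]
    abel
  zero_mem' := ⟨0, by intro a b c; simp⟩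
  neg_mem' := by
    rintro f ⟨φ, hφ⟩
    refine ⟨-φ, fun a b c => ?_⟩
    simp only [Pi.neg_apply, smul_neg, hφ a b c]
    abel

/-- Third group cohomology `H³(G, M)`, via inhomogeneous cochains. -/
abbrev H3 := cocycles3 G M ⧸ ((coboundaries3 G M).addSubgroupOf (cocycles3 G M))

/-- The subgroup of 2-cocycles whose restriction to every cyclic subgroup is a
coboundary. -/
def shaCocycles : AddSubgroup (G → G → M) where
  carrier := {f | IsCocycle2 G M f ∧ ∀ (C : Subgroup G), IsCyclic C →
      IsCoboundary2 C M (fun a b : C => f a b)}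
  add_mem' := by
    rintro f g ⟨hf1, hf2⟩ ⟨hg1, hg2⟩
    refine ⟨(cocycles2 G M).add_mem hf1 hg1, fun C hC => ?_⟩
    obtain ⟨φ, hφ⟩ := hf2 C hC
    obtain ⟨ψ, hψ⟩ := hg2 C hC
    refine ⟨φ + ψ, fun a b => ?_⟩
    simp only [Pi.add_apply, smul_add, hφ a b, hψ a b]
    abel
  zero_mem' := by
    refine ⟨(cocycles2 G M).zero_mem, fun C hC => ⟨0, by intro a b; simp⟩⟩
  neg_mem' := by
    rintro f ⟨hf1, hf2⟩
    refine ⟨(cocycles2 G M).neg_mem hf1, fun C hC => ?_⟩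
    obtain ⟨φ, hφ⟩ := hf2 C hC
    refine ⟨-φ, fun a b => ?_⟩
    simp only [Pi.neg_apply, smul_neg, hφ a b]
    abel

/-- The Tate–Shafarevich group `Ш²(G, M)`: the kernel of
`H²(G,M) → ∏_C H²(C,M)` over all cyclic subgroups `C ⊆ G`, realized as
(locally trivial 2-cocycles) / (2-coboundaries). -/
abbrev Sha2 := shaCocycles G M ⧸ ((coboundaries2 G M).addSubgroupOf (shaCocycles G M))

end Cohomology

/-- `M` with the trivial action of `G`. -/
def TrivAct (G M : Type) : Type := M

instance (G M : Type) [AddCommGroup M] : AddCommGroup (TrivAct G M) :=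
  inferInstanceAs (AddCommGroup M)

instance (G M : Type) [Group G] [AddCommGroup M] : DistribMulAction G (TrivAct G M) where
  smul _ m := m
  one_smul _ := rfl
  mul_smul _ _ _ := rfl
  smul_zero _ := rfl
  smul_add _ _ _ := rfl

section JGamma

/-- The subgroup of `ℤ[Γ] = (Γ → ℤ)` generated by the norm element `∑_{s∈Γ} s`
(the constant function `1`). -/
def normSub (Γ : Type) : AddSubgroup (Γ → ℤ) :=
  AddSubgroup.zmultiples (fun _ => (1 : ℤ))

/-- The lattice `J_Γ = ℤ[Γ]/ℤ`, the cokernel of the norm map `ℤ → ℤ[Γ]`.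
Here `ℤ[Γ]` is modelled as functions `Γ → ℤ` with `Γ` acting by left translation;
the norm element is the constant function `1`. -/
abbrev JLat (Γ : Type) := (Γ → ℤ) ⧸ normSub Γ

variable {Γ : Type} [Group Γ]

/-- Left translation on `ℤ[Γ] = (Γ → ℤ)`. -/
def shiftHom (g : Γ) : (Γ → ℤ) →+ (Γ → ℤ) where
  toFun f := fun h => f (g⁻¹ * h)
  map_zero' := rfl
  map_add' _ _ := rfl

instance : DistribMulAction Γ (JLat Γ) where
  smul g := fun x => QuotientAddGroup.map _ _ (shiftHom g)
    (by rintro f ⟨n, rfl⟩; exact ⟨n, rfl⟩) x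
  one_smul := by
    intro x
    refine QuotientAddGroup.induction_on x fun f => ?_
    show QuotientAddGroup.map _ _ _ _ _ = _
    rw [QuotientAddGroup.map_mk]
    congr 1
    funext h
    simp [shiftHom]
  mul_smul := by
    intro g g' x
    refine QuotientAddGroup.induction_on x fun f => ?_
    show QuotientAddGroup.map _ _ _ _ _ =
      QuotientAddGroup.map _ _ _ _ (QuotientAddGroup.map _ _ _ _ _)
    rw [QuotientAddGroup.map_mk, QuotientAddGroup.map_mk, QuotientAddGroup.map_mk]
    congr 1
    funext h
    simp [shiftHom, mul_assoc]
  smul_zero := by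
    intro g
    exact map_zero (QuotientAddGroup.map _ _ (shiftHom g)
      (by rintro f ⟨n, rfl⟩; exact ⟨n, rfl⟩))
  smul_add := by
    intro g x y
    exact map_add (QuotientAddGroup.map _ _ (shiftHom g)
      (by rintro f ⟨n, rfl⟩; exact ⟨n, rfl⟩)) x y

end JGamma



/-! ### Auxiliary construction: kernel invariants -/

section InvariantsConstruction

variable {Γ₁ Γ : Type} [Group Γ₁] [Group Γ]

/-- The `ℤ`-submodule of elements invariant under the kernel of `φ`. -/
def invSub (φ : Γ₁ →* Γ) (M : Type) [AddCommGroup M] [DistribMulAction Γ₁ M] :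
    Submodule ℤ M where
  carrier := {x | ∀ δ : Γ₁, φ δ = 1 → δ • x = x}
  add_mem' := fun ha hb δ hδ => by rw [smul_add, ha δ hδ, hb δ hδ]
  zero_mem' := fun δ _ => smul_zero δ
  smul_mem' := fun n x hx δ hδ => by
    have h1 : δ • (n • x) = n • (δ • x) :=
      map_zsmul (DistribMulAction.toAddMonoidHom M δ) n x
    rw [h1, hx δ hδ]

theorem invSub_smul_congr (φ : Γ₁ →* Γ) {M : Type} [AddCommGroup M]
    [DistribMulAction Γ₁ M] {γ₁ γ₂ : Γ₁} (h : φ γ₁ = φ γ₂) {x : M}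
    (hx : x ∈ invSub φ M) : γ₁ • x = γ₂ • x := by
  have h1 : φ (γ₂⁻¹ * γ₁) = 1 := by rw [map_mul, map_inv, h, inv_mul_cancel]
  calc γ₁ • x = γ₂ • ((γ₂⁻¹ * γ₁) • x) := by rw [← mul_smul, mul_inv_cancel_left]
    _ = γ₂ • x := by rw [hx _ h1]

theorem smul_mem_invSub (φ : Γ₁ →* Γ) {M : Type} [AddCommGroup M]
    [DistribMulAction Γ₁ M] (γ : Γ₁) {x : M} (hx : x ∈ invSub φ M) :
    γ • x ∈ invSub φ M := fun δ hδ => by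
  rw [← mul_smul]
  exact invSub_smul_congr φ (by rw [map_mul, hδ, one_mul]) hx

/-- Kernel invariants of a `Γ₁`-module, as a `Γ`-module. -/
noncomputable def invMod (φ : Γ₁ →* Γ) (hφ : Function.Surjective φ)
    (M : GammaMod Γ₁) : GammaMod Γ where
  carrier := invSub φ M.carrier
  act :=
    { smul := fun γ x => ⟨Function.surjInv hφ γ • (x : M.carrier),
        smul_mem_invSub φ _ x.2⟩
      one_smul := fun x => Subtype.ext <| x.2 _ (Function.surjInv_eq hφ 1)
      mul_smul := fun γ γ' x => Subtype.ext <| by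
        show Function.surjInv hφ (γ * γ') • (x : M.carrier) =
          Function.surjInv hφ γ • (Function.surjInv hφ γ' • (x : M.carrier))
        rw [← mul_smul]
        refine invSub_smul_congr φ ?_ x.2
        rw [map_mul, Function.surjInv_eq hφ, Function.surjInv_eq hφ,
          Function.surjInv_eq hφ]
      smul_zero := fun γ => Subtype.ext <| by
        show Function.surjInv hφ γ • (0 : M.carrier) = 0
        rw [smul_zero]
      smul_add := fun γ x y => Subtype.ext <| by
        show Function.surjInv hφ γ • ((x : M.carrier) + y) = _
        rw [smul_add]; rfl }

theorem invMod_isPermutation (φ : Γ₁ →* Γ) (hφ : Function.Surjective φ)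
    [Finite Γ₁] (P : GammaMod Γ₁) (hP : IsPermutation P) :
    IsPermutation (invMod φ hφ P) := by
  classical
  obtain ⟨ι, hι, b, hb⟩ := hP
  haveI := hι
  choose σ hσ using hb
  have binj : Function.Injective b := b.injective
  have hσ_mul : ∀ (γ γ' : Γ₁) (i : ι), σ (γ * γ') i = σ γ (σ γ' i) := by
    intro γ γ' i
    apply binj
    rw [← hσ, ← hσ, ← hσ, mul_smul]
  have hσ_one : ∀ i, σ 1 i = i := fun i => binj (by rw [← hσ, one_smul])
  have hσ_inv : ∀ (γ : Γ₁) (i : ι), σ γ⁻¹ (σ γ i) = i := fun γ i => by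
    rw [← hσ_mul, inv_mul_cancel, hσ_one]
  have hσ_inj : ∀ γ : Γ₁, Function.Injective (σ γ) := by
    intro γ i j hij
    have := congrArg (σ γ⁻¹) hij
    rwa [hσ_inv, hσ_inv] at this
  -- the orbit equivalence relation of the kernel
  let r : Setoid ι :=
    ⟨fun i j => ∃ δ : Γ₁, φ δ = 1 ∧ σ δ i = j,
      ⟨fun i => ⟨1, map_one φ, hσ_one i⟩,
       fun {i j} => fun ⟨δ, h1, h2⟩ => ⟨δ⁻¹, by rw [map_inv, h1, inv_one],
         by rw [← h2, hσ_inv]⟩,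
       fun {i j k} => fun ⟨δ, h1, h2⟩ ⟨ε, h3, h4⟩ =>
         ⟨ε * δ, by rw [map_mul, h1, h3, one_mul],
           by rw [hσ_mul, h2, h4]⟩⟩⟩
  let κ := Quotient r
  haveI : Fintype κ := Fintype.ofFinite κ
  let O : κ → Finset ι := fun c => Finset.univ.filter (fun i => Quotient.mk r i = c)
  let κmap : Γ₁ → κ → κ := fun γ => Quotient.map (σ γ)
    (by
      rintro i j ⟨δ, h1, h2⟩
      refine ⟨γ * δ * γ⁻¹, by rw [map_mul, map_mul, h1, map_inv, mul_one,
        mul_inv_cancel], ?_⟩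
      rw [hσ_mul, hσ_mul, hσ_inv, h2])
  have κmap_mk : ∀ (γ : Γ₁) (i : ι), κmap γ (Quotient.mk r i) = Quotient.mk r (σ γ i) :=
    fun γ i => rfl
  have κmap_inv : ∀ (γ : Γ₁) (c : κ), κmap γ⁻¹ (κmap γ c) = c := by
    intro γ c
    induction c using Quotient.ind with
    | _ i => rw [κmap_mk, κmap_mk, hσ_inv]
  have κmap_ker : ∀ (δ : Γ₁), φ δ = 1 → ∀ c : κ, κmap δ c = c := by
    intro δ hδ c
    induction c using Quotient.ind with
    | _ i => rw [κmap_mk]; exact Quotient.sound ⟨δ⁻¹, by rw [map_inv, hδ, inv_one],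
        hσ_inv δ i⟩
  -- reindexing sums over orbits
  have hmemO : ∀ {i : ι} {c : κ}, i ∈ O c ↔ Quotient.mk r i = c := by
    intro i c
    simp [O]
  have hsum : ∀ (γ : Γ₁) (c : κ),
      γ • (∑ i ∈ O c, b i) = ∑ i ∈ O (κmap γ c), b i := by
    intro γ c
    rw [Finset.smul_sum]
    refine Finset.sum_nbij' (σ γ) (σ γ⁻¹) ?_ ?_ ?_ ?_ ?_
    · intro i hi
      rw [hmemO] at hi ⊢
      rw [← hi, κmap_mk]
    · intro j hj
      rw [hmemO] at hj ⊢
      have := congrArg (κmap γ⁻¹) hj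
      rw [κmap_inv] at this
      rw [← this, κmap_mk]
    · intro i _; exact hσ_inv γ i
    · intro j _
      have := hσ_inv γ⁻¹ j
      rwa [inv_inv] at this
    · intro i _; exact hσ γ i
  -- smul commutes with ℤ-scalars
  have smul_zsmul : ∀ (γ : Γ₁) (n : ℤ) (w : P.carrier), γ • (n • w) = n • (γ • w) :=
    fun γ n w => map_zsmul (DistribMulAction.toAddMonoidHom P.carrier γ) n w
  -- constancy of coordinates of invariants on orbits
  have hconst : ∀ (x : P.carrier), x ∈ invSub φ P.carrier →
      ∀ (δ : Γ₁), φ δ = 1 → ∀ i, b.repr x (σ δ i) = b.repr x i := by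
    intro x hx δ hδ i
    have e1 : ∑ j, b.repr x j • b (σ δ j) = x := by
      conv_rhs => rw [← hx δ hδ, ← b.sum_repr x]
      rw [Finset.smul_sum]
      refine Finset.sum_congr rfl fun j _ => ?_
      rw [smul_zsmul, hσ]
    have e2 := congrArg (fun w => b.repr w (σ δ i)) e1
    simp only [map_sum, map_smul, Module.Basis.repr_self, Finsupp.coe_finset_sum,
      Finset.sum_apply, Finsupp.smul_apply, Finsupp.single_apply] at e2
    rw [← e2]
    rw [Finset.sum_eq_single i]
    · simp
    · intro j _ hj
      rw [if_neg (fun hc => hj (hσ_inj δ hc)), smul_zero]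
    · intro hi; exact absurd (Finset.mem_univ i) hi
  have hconst' : ∀ (x : P.carrier), x ∈ invSub φ P.carrier →
      ∀ i j : ι, Quotient.mk r i = Quotient.mk r j → b.repr x i = b.repr x j := by
    intro x hx i j hij
    obtain ⟨δ, h1, h2⟩ := Quotient.exact hij
    rw [← h2, hconst x hx δ h1]
  -- the orbit-sum vectors
  have hvmem : ∀ c : κ, (∑ i ∈ O c, b i) ∈ invSub φ P.carrier := by
    intro c δ hδ
    rw [hsum δ c, κmap_ker δ hδ c]
  let v : κ → ↥(invSub φ P.carrier) := fun c => ⟨∑ i ∈ O c, b i, hvmem c⟩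
  -- partition identity
  have hpart : ∀ (w : ι → P.carrier),
      ∑ c : κ, ∑ i ∈ O c, w i = ∑ i : ι, w i := by
    intro w
    exact Finset.sum_fiberwise_of_maps_to (fun i _ => Finset.mem_univ _) w
  -- linear independence
  have hli : LinearIndependent ℤ v := by
    rw [Fintype.linearIndependent_iff]
    intro a ha c0
    have ha' : ∑ c : κ, a c • (∑ i ∈ O c, b i) = 0 := by
      have := congrArg ((invSub φ P.carrier).subtype) ha
      rw [map_sum, map_zero] at this
      simp only [map_smul] at this
      exact this
    have ha'' : ∑ i : ι, a (Quotient.mk r i) • b i = 0 := by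
      rw [← hpart (fun i => a (Quotient.mk r i) • b i)]
      rw [← ha']
      refine Finset.sum_congr rfl fun c _ => ?_
      rw [Finset.smul_sum]
      refine Finset.sum_congr rfl fun i hi => ?_
      rw [hmemO.mp hi]
    have hz := Fintype.linearIndependent_iff.mp b.linearIndependent
      (fun i => a (Quotient.mk r i)) ha''
    simpa using hz (Quotient.out c0)
  -- spanning
  have hspan : ⊤ ≤ Submodule.span ℤ (Set.range v) := by
    rintro x -
    have hrep : x = ∑ c : κ, b.repr (x : P.carrier) (Quotient.out c) • v c := by
      apply Subtype.ext
      have h3 : ((∑ c : κ, b.repr (x : P.carrier) (Quotient.out c) • v c :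
          ↥(invSub φ P.carrier)) : P.carrier)
          = ∑ c : κ, b.repr (x : P.carrier) (Quotient.out c) • (∑ i ∈ O c, b i) := by
        rw [show ((∑ c : κ, b.repr (x : P.carrier) (Quotient.out c) • v c :
            ↥(invSub φ P.carrier)) : P.carrier)
            = (invSub φ P.carrier).subtype
              (∑ c : κ, b.repr (x : P.carrier) (Quotient.out c) • v c) from rfl,
          map_sum]
        refine Finset.sum_congr rfl fun c _ => ?_
        rw [map_smul]
        rfl
      rw [h3]
      have : ∑ c : κ, b.repr (x : P.carrier) (Quotient.out c) • (∑ i ∈ O c, b i)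
          = ∑ c : κ, ∑ i ∈ O c, b.repr (x : P.carrier) i • b i := by
        refine Finset.sum_congr rfl fun c _ => ?_
        rw [Finset.smul_sum]
        refine Finset.sum_congr rfl fun i hi => ?_
        congr 1
        refine hconst' _ x.2 (Quotient.out c) i ?_
        rw [Quotient.out_eq, hmemO.mp hi]
      rw [this, hpart (fun i => b.repr (x : P.carrier) i • b i)]
      conv_lhs => rw [← b.sum_repr (x : P.carrier)]
    rw [hrep]
    exact Submodule.sum_mem _ fun c _ =>
      Submodule.smul_mem _ _ (Submodule.subset_span ⟨c, rfl⟩)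
  refine ⟨κ, inferInstance, Module.Basis.mk hli hspan, ?_⟩
  intro γ c
  refine ⟨κmap (Function.surjInv hφ γ) c, ?_⟩
  erw [Module.Basis.mk_apply, Module.Basis.mk_apply]
  refine Subtype.ext ?_
  show Function.surjInv hφ γ • (v c).val = (v (κmap (Function.surjInv hφ γ) c)).val
  exact hsum _ c

end InvariantsConstruction

/-- If `φ : Γ₁ → Γ` is a surjective homomorphism of finite groups and
`L` is a `Γ`-lattice which is quasi-permutation as a `Γ₁`-lattice (via `φ`), then `L` is
quasi-permutation as a `Γ`-lattice. -/
theorem quasiPermutation_of_quasiPermutation_pullback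
    (Γ₁ Γ : Type) [Group Γ₁] [Group Γ] [Finite Γ₁] [Finite Γ]
    (φ : Γ₁ →* Γ) (hφ : Function.Surjective φ)
    (L : Type) [AddCommGroup L] [DistribMulAction Γ L]
    [Module.Free ℤ L] [Module.Finite ℤ L]
    (h : IsQuasiPermutation (Γ := Γ₁)
      (@GammaMod.mk Γ₁ _ L _ (DistribMulAction.compHom L φ))) :
    IsQuasiPermutation (Γ := Γ) ⟨L⟩ := by
  classical
  obtain ⟨P, P', hP, hP', f, g, hfE, hgE, hfinj, hgsurj, hexact⟩ := h
  -- f maps into the kernel invariants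
  have hfmem : ∀ x : L, f x ∈ invSub φ P.carrier := by
    intro x δ hδ
    rw [← hfE δ x]
    congr 1
    show φ δ • x = x
    rw [hδ, one_smul]
  have hgmem : ∀ p : P.carrier, p ∈ invSub φ P.carrier →
      g p ∈ invSub φ P'.carrier := by
    intro p hp δ hδ
    rw [← hgE δ p, hp δ hδ]
  -- the restricted morphisms
  let f' : L →+ ↥(invSub φ P.carrier) :=
    { toFun := fun x => ⟨f x, hfmem x⟩
      map_zero' := Subtype.ext (map_zero f)
      map_add' := fun a b => Subtype.ext (map_add f a b) }
  let g' : ↥(invSub φ P.carrier) →+ ↥(invSub φ P'.carrier) :=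
    { toFun := fun p => ⟨g p.val, hgmem p.val p.2⟩
      map_zero' := Subtype.ext (map_zero g)
      map_add' := fun a b => Subtype.ext (map_add g a.val b.val) }
  refine ⟨invMod φ hφ P, invMod φ hφ P',
    invMod_isPermutation φ hφ P hP, invMod_isPermutation φ hφ P' hP',
    f', g', ?_, ?_, ?_, ?_, ?_⟩
  · -- equivariance of f'
    intro γ x
    refine Subtype.ext ?_
    show f (γ • x) = Function.surjInv hφ γ • f x
    have hsγ : φ (Function.surjInv hφ γ) = γ := Function.surjInv_eq hφ γ
    rw [show (γ • x : L) = φ (Function.surjInv hφ γ) • x by rw [hsγ]]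
    exact hfE (Function.surjInv hφ γ) x
  · -- equivariance of g'
    intro γ p
    refine Subtype.ext ?_
    show g (Function.surjInv hφ γ • p.val) = Function.surjInv hφ γ • g p.val
    exact hgE (Function.surjInv hφ γ) p.val
  · -- injectivity
    intro a b hab
    exact hfinj (congrArg Subtype.val hab)
  · -- surjectivity
    intro y
    obtain ⟨x, hx⟩ := hgsurj y.val
    have htriv : ∀ ε : Γ₁, φ ε = 1 → ∀ p ∈ Set.range f, ε • p = p := by
      rintro ε hε p ⟨ℓ, rfl⟩
      rw [← hfE]
      congr 1
      show φ ε • ℓ = ℓ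
      rw [hε, one_smul]
    have hker : ∀ ε : Γ₁, φ ε = 1 → ε • x - x ∈ Set.range f := by
      intro ε hε
      rw [← hexact, map_sub, hgE, hx, y.2 ε hε, sub_self]
    have key : ∀ δ : Γ₁, φ δ = 1 → δ • x = x := by
      intro δ hδ
      have hiter : ∀ k : ℕ, δ ^ k • x - x = (k : ℤ) • (δ • x - x) := by
        intro k
        induction k with
        | zero => simp
        | succ n ih =>
          have h1 : δ ^ (n + 1) • x = δ ^ n • (δ • x) := by
            rw [pow_succ, mul_smul]
          have h2 : δ ^ n • (δ • x) - δ ^ n • x = δ • x - x := by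
            have h3 : δ ^ n • (δ • x - x) = δ • x - x :=
              htriv (δ ^ n) (by rw [map_pow, hδ, one_pow]) _ (hker δ hδ)
            rw [smul_sub] at h3
            exact h3
          calc δ ^ (n + 1) • x - x
              = (δ ^ n • (δ • x) - δ ^ n • x) + (δ ^ n • x - x) := by
                rw [h1]; abel
            _ = (δ • x - x) + (n : ℤ) • (δ • x - x) := by rw [h2, ih]
            _ = ((n + 1 : ℕ) : ℤ) • (δ • x - x) := by
                push_cast
                rw [add_smul, one_smul]
                abel
      have hn : δ ^ orderOf δ = 1 := pow_orderOf_eq_one δ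
      have h0 : ((orderOf δ : ℤ)) • (δ • x - x) = 0 := by
        rw [← hiter, hn, one_smul, sub_self]
      have hne : (orderOf δ : ℤ) ≠ 0 := by
        exact_mod_cast (orderOf_pos δ).ne'
      -- torsion-freeness of P via its basis
      obtain ⟨ιP, hιP, bP, -⟩ := hP
      have hw : bP.repr (δ • x - x) = 0 := by
        have h4 := congrArg bP.repr h0
        rw [map_zsmul, map_zero] at h4
        ext a
        have h5 := congrArg (fun F => F a) h4
        simp only [Finsupp.smul_apply, smul_eq_mul, Finsupp.coe_zero,
          Pi.zero_apply] at h5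
        rcases mul_eq_zero.mp h5 with h | h
        · exact absurd h hne
        · simpa using h
      have h6 : δ • x - x = 0 := by
        have := bP.repr.injective (by rw [hw, map_zero] : bP.repr (δ • x - x)
          = bP.repr 0)
        exact this
      rw [sub_eq_zero] at h6
      exact h6
    refine ⟨⟨x, key⟩, Subtype.ext hx⟩
  · -- exactness
    intro z
    constructor
    · intro hz
      obtain ⟨ℓ, hℓ⟩ := (hexact z.val).mp (congrArg Subtype.val hz)
      exact ⟨ℓ, Subtype.ext hℓ⟩
    · rintro ⟨ℓ, rfl⟩
      refine Subtype.ext ?_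
      exact (hexact (f' ℓ).val).mpr ⟨ℓ, rfl⟩
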